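/- Let G be a finite group and k a field whose characteristic does not divide the order of G. If f ∈ k[G] is a nilpotent element of the group algebra, then the coefficient of f at the identity element of G is zero. -/

import Mathlib

/-- Let `G` be a finite group and `k` a field whose characteristic
does not divide the order of `G`.  If `f ∈ k[G]` is a nilpotent element of the group
algebra, then the coefficient of `f` at the identity element of `G` is zero. -/
theorem coeff_one_eq_zero_of_isNilpotent
    (G : Type*) [Group G] [Fintype G] (k : Type*) [Field k]
    (hchar : ¬ (ringChar k ∣ Fintype.card G))
    (f : MonoidAlgebra k G) (hf : IsNilpotent f) :
    f.coeff 1 = 0 := by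
  classical
  let b : Module.Basis G k (MonoidAlgebra k G) := MonoidAlgebra.basis G k
  have : Module.Finite k (MonoidAlgebra k G) := Module.Finite.of_basis b
  set T : MonoidAlgebra k G →ₗ[k] MonoidAlgebra k G := LinearMap.mulLeft k f with hT
  have hTnil : IsNilpotent T := by
    obtain ⟨n, hn⟩ := hf
    exact ⟨n, by rw [hT, LinearMap.pow_mulLeft, hn, LinearMap.mulLeft_zero_eq_zero]⟩
  have htr0 : LinearMap.trace k _ T = 0 :=
    (LinearMap.isNilpotent_trace_of_isNilpotent hTnil).eq_zero
  have hb : LinearMap.trace k _ T = (Fintype.card G : k) * f.coeff 1 := by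
    rw [LinearMap.trace_eq_matrix_trace k b, Matrix.trace]
    have hdiag : ∀ g : G, (LinearMap.toMatrix b b T) g g = f.coeff 1 := by
      intro g
      rw [LinearMap.toMatrix_apply]
      have hbg : b g = MonoidAlgebra.single g 1 := rfl
      have hrepr : ∀ (x : MonoidAlgebra k G), b.repr x = x.coeff := fun x => rfl
      rw [hbg, hrepr]
      show (f * MonoidAlgebra.single g 1 : MonoidAlgebra k G).coeff g = f.coeff 1
      rw [MonoidAlgebra.coeff_mul_single_apply, mul_inv_cancel, mul_one]
    simp_rw [Matrix.diag_apply, hdiag]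
    simp [Finset.card_univ, mul_comm]
  rw [htr0] at hb
  have hcard : (Fintype.card G : k) ≠ 0 := fun h => hchar ((ringChar.spec k _).mp h)
  exact (mul_eq_zero.mp hb.symm).resolve_left hcard
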